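/- Let x* ∈ ℝⁿ be a strict saddle point of f and let 0 < α < 1/L. Then the Jacobian Dg_{αf}(x*) of the block coordinate gradient descent map g_{αf} at x* has at least one (complex) eigenvalue whose magnitude is strictly greater than one. -/

import Mathlib

open Matrix MeasureTheory Filter Topology

noncomputable section

/-- A map is a (C¹) diffeomorphism if it is continuously differentiable, bijective,
and its inverse is continuously differentiable. -/
def IsDiffeomorphism {E : Type*} [NormedAddCommGroup E] [NormedSpace ℝ E] (g : E → E) : Prop :=
  ContDiff ℝ 1 g ∧ Function.Bijective g ∧ ContDiff ℝ 1 (Function.invFun g)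

/-- Jacobian matrix of a self-map of a Euclidean space. -/
def jacobianMatrix {ι : Type*} [Fintype ι] [DecidableEq ι]
    (g : EuclideanSpace ℝ ι → EuclideanSpace ℝ ι) (x : EuclideanSpace ℝ ι) :
    Matrix ι ι ℝ :=
  Matrix.of fun i j => fderiv ℝ g x (EuclideanSpace.single j 1) i

/-- The Hessian matrix of `f` at `x` (Jacobian of the gradient). -/
def hessianMatrix {ι : Type*} [Fintype ι] [DecidableEq ι]
    (f : EuclideanSpace ℝ ι → ℝ) (x : EuclideanSpace ℝ ι) : Matrix ι ι ℝ :=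
  jacobianMatrix (gradient f) x

/-- `z` is an eigenvalue (over `ℂ`) of the real matrix `M`. -/
def IsEigenvalue {ι : Type*} [Fintype ι] (M : Matrix ι ι ℝ) (z : ℂ) : Prop :=
  ∃ v : ι → ℂ, v ≠ 0 ∧ (M.map Complex.ofReal).mulVec v = z • v

/-- A real matrix has a negative (real) eigenvalue. -/
def HasNegEigenvalue {ι : Type*} [Fintype ι] (M : Matrix ι ι ℝ) : Prop :=
  ∃ (c : ℝ) (v : ι → ℝ), c < 0 ∧ v ≠ 0 ∧ M.mulVec v = c • v

/-- Strict saddle point: critical point whose Hessian has a negative eigenvalue. -/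
def IsStrictSaddle {ι : Type*} [Fintype ι] [DecidableEq ι]
    (f : EuclideanSpace ℝ ι → ℝ) (x : EuclideanSpace ℝ ι) : Prop :=
  gradient f x = 0 ∧ HasNegEigenvalue (hessianMatrix f x)

/-- The block-gradient-descent step `g^s_{αf}(x) = x - α U_s ∇_s f(x)`. -/
def blockGradStep {n p : ℕ} (f : EuclideanSpace ℝ (Fin n) → ℝ) (α : ℝ)
    (blk : Fin n → Fin p) (s : Fin p) (x : EuclideanSpace ℝ (Fin n)) :
    EuclideanSpace ℝ (Fin n) :=
  (WithLp.equiv 2 (Fin n → ℝ)).symm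
    fun i => x i - if blk i = s then α * gradient f x i else 0

/-- The BCGD map `g_{αf} = g^p ∘ ⋯ ∘ g^1` (block 1 is applied first). -/
def bcgdMap {n p : ℕ} (f : EuclideanSpace ℝ (Fin n) → ℝ) (α : ℝ)
    (blk : Fin n → Fin p) (x : EuclideanSpace ℝ (Fin n)) : EuclideanSpace ℝ (Fin n) :=
  (List.finRange p).foldl (fun y s => blockGradStep f α blk s y) x

/-- The projection matrix `U_s U_sᵀ` onto the coordinates of block `s`. -/
def blockProj {n p : ℕ} (blk : Fin n → Fin p) (s : Fin p) : Matrix (Fin n) (Fin n) ℝ :=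
  Matrix.diagonal fun i => if blk i = s then 1 else 0

/-- Strictly block lower triangular part of a matrix. -/
def lowerBlockPart {n p : ℕ} (blk : Fin n → Fin p) (A : Matrix (Fin n) (Fin n) ℝ) :
    Matrix (Fin n) (Fin n) ℝ :=
  Matrix.of fun i j => if blk j < blk i then A i j else 0

/-- Strictly block upper triangular part of a matrix. -/
def upperBlockPart {n p : ℕ} (blk : Fin n → Fin p) (A : Matrix (Fin n) (Fin n) ℝ) :
    Matrix (Fin n) (Fin n) ℝ :=
  Matrix.of fun i j => if blk i < blk j then A i j else 0

/-- Spectral radius of a real matrix: the largest modulus of its complex eigenvalues. -/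
def specRad {ι : Type*} [Fintype ι] (M : Matrix ι ι ℝ) : ℝ :=
  sSup {r : ℝ | ∃ z : ℂ, IsEigenvalue M z ∧ r = ‖z‖}


-- ===== Part A: matrices of continuous linear maps, Jacobian of BCGD =====

/-- Matrix of a continuous linear self-map of Euclidean space w.r.t. std basis. -/
def clmMat {n : ℕ} (T : EuclideanSpace ℝ (Fin n) →L[ℝ] EuclideanSpace ℝ (Fin n)) :
    Matrix (Fin n) (Fin n) ℝ :=
  Matrix.of fun i j => T (EuclideanSpace.single j 1) i

lemma euclidean_eq_sum_single {n : ℕ} (v : EuclideanSpace ℝ (Fin n)) :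
    v = ∑ j, v j • EuclideanSpace.single j (1:ℝ) := by
  ext i
  rw [WithLp.ofLp_sum, Finset.sum_apply]
  simp only [PiLp.smul_apply, EuclideanSpace.single_apply, smul_eq_mul]
  simp [Finset.sum_ite_eq' Finset.univ i (fun j => v j)]

lemma clmMat_mulVec {n : ℕ} (T : EuclideanSpace ℝ (Fin n) →L[ℝ] EuclideanSpace ℝ (Fin n))
    (v : EuclideanSpace ℝ (Fin n)) : clmMat T *ᵥ v = T v := by
  funext i
  conv_rhs => rw [euclidean_eq_sum_single v]
  rw [map_sum]
  rw [WithLp.ofLp_sum, Finset.sum_apply]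
  simp only [_root_.map_smul]
  simp only [Matrix.mulVec, dotProduct, clmMat, Matrix.of_apply]
  refine Finset.sum_congr rfl fun j _ => ?_
  simp [mul_comm]

lemma clmMat_comp {n : ℕ} (T S : EuclideanSpace ℝ (Fin n) →L[ℝ] EuclideanSpace ℝ (Fin n)) :
    clmMat (T.comp S) = clmMat T * clmMat S := by
  ext i j
  have : (T.comp S) (EuclideanSpace.single j 1) = T (S (EuclideanSpace.single j 1)) := rfl
  show (T.comp S) (EuclideanSpace.single j 1) i = _
  rw [this, ← clmMat_mulVec T (S (EuclideanSpace.single j 1))]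
  simp [Matrix.mul_apply, Matrix.mulVec, dotProduct, clmMat]

lemma clmMat_id {n : ℕ} : clmMat (ContinuousLinearMap.id ℝ (EuclideanSpace ℝ (Fin n))) = 1 := by
  ext i j
  show EuclideanSpace.single j (1:ℝ) i = (1 : Matrix (Fin n) (Fin n) ℝ) i j
  simp [EuclideanSpace.single_apply, Matrix.one_apply, eq_comm]

lemma jacobianMatrix_eq_clmMat {n : ℕ} {g : EuclideanSpace ℝ (Fin n) → EuclideanSpace ℝ (Fin n)}
    {x : EuclideanSpace ℝ (Fin n)} {T : EuclideanSpace ℝ (Fin n) →L[ℝ] EuclideanSpace ℝ (Fin n)}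
    (h : HasFDerivAt g T x) :
    (Matrix.of fun i j => fderiv ℝ g x (EuclideanSpace.single j 1) i) = clmMat T := by
  rw [h.fderiv]; rfl

-- ===== blockGradStep and its derivative =====

/-- The coordinate projection onto block `s` as a continuous linear map. -/
def projCLM {n p : ℕ} (blk : Fin n → Fin p) (s : Fin p) :
    EuclideanSpace ℝ (Fin n) →L[ℝ] EuclideanSpace ℝ (Fin n) :=
  LinearMap.toContinuousLinearMap
    { toFun := fun x => (WithLp.equiv 2 (Fin n → ℝ)).symm fun i => if blk i = s then x i else 0
      map_add' := by
        intro x y; ext i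
        show (if blk i = s then (x + y) i else 0) = _
        show _ = (if blk i = s then x i else 0) + (if blk i = s then y i else 0)
        split <;> simp
      map_smul' := by
        intro c x; ext i
        show (if blk i = s then (c • x) i else 0) = c * (if blk i = s then x i else 0)
        split <;> simp }

lemma projCLM_apply {n p : ℕ} (blk : Fin n → Fin p) (s : Fin p)
    (x : EuclideanSpace ℝ (Fin n)) (i : Fin n) :
    projCLM blk s x i = if blk i = s then x i else 0 := rfl

lemma blockGradStep_eq {n p : ℕ} (f : EuclideanSpace ℝ (Fin n) → ℝ) (α : ℝ)
    (blk : Fin n → Fin p) (s : Fin p) (x : EuclideanSpace ℝ (Fin n)) :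
    blockGradStep f α blk s x = x - projCLM blk s (α • gradient f x) := by
  ext i
  show x i - (if blk i = s then α * gradient f x i else 0)
      = x i - (if blk i = s then (α • gradient f x) i else 0)
  congr 1

lemma blockGradStep_fixed {n p : ℕ} {f : EuclideanSpace ℝ (Fin n) → ℝ} {α : ℝ}
    {blk : Fin n → Fin p} {s : Fin p} {xs : EuclideanSpace ℝ (Fin n)}
    (h0 : gradient f xs = 0) : blockGradStep f α blk s xs = xs := by
  rw [blockGradStep_eq, h0]
  simp

lemma hasFDerivAt_blockGradStep {n p : ℕ} {f : EuclideanSpace ℝ (Fin n) → ℝ} (α : ℝ)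
    (blk : Fin n → Fin p) (s : Fin p) {x : EuclideanSpace ℝ (Fin n)}
    {D : EuclideanSpace ℝ (Fin n) →L[ℝ] EuclideanSpace ℝ (Fin n)}
    (hD : HasFDerivAt (gradient f) D x) :
    HasFDerivAt (blockGradStep f α blk s)
      (ContinuousLinearMap.id ℝ (EuclideanSpace ℝ (Fin n))
        - (projCLM blk s).comp (α • D)) x := by
  have h1 : HasFDerivAt (fun y => y - projCLM blk s (α • gradient f y))
      (ContinuousLinearMap.id ℝ (EuclideanSpace ℝ (Fin n))
        - (projCLM blk s).comp (α • D)) x := by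
    refine (hasFDerivAt_id x).sub ?_
    exact ((projCLM blk s).hasFDerivAt).comp x (hD.const_smul α)
  have : (fun y => y - projCLM blk s (α • gradient f y)) = blockGradStep f α blk s := by
    funext y; rw [blockGradStep_eq]
  rwa [this] at h1




-- ===== Jacobian of the full BCGD map at a critical point =====

section JacobianComp

variable {n p : ℕ} {f : EuclideanSpace ℝ (Fin n) → ℝ} {α : ℝ} {blk : Fin n → Fin p}
  {xs : EuclideanSpace ℝ (Fin n)}

lemma gradient_contDiff (hf : ContDiff ℝ 2 f) : ContDiff ℝ 1 (gradient f) := by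
  have h1 : ContDiff ℝ 1 (fderiv ℝ f) := hf.fderiv_right (by norm_num)
  have : gradient f = fun x =>
      (InnerProductSpace.toDual ℝ (EuclideanSpace ℝ (Fin n))).symm (fderiv ℝ f x) := rfl
  rw [this]
  exact (InnerProductSpace.toDual ℝ (EuclideanSpace ℝ (Fin n))).symm.contDiff.comp h1

lemma clmMat_step (hD : HasFDerivAt (gradient f) (D : _ →L[ℝ] _) xs) (s : Fin p) :
    clmMat (ContinuousLinearMap.id ℝ (EuclideanSpace ℝ (Fin n))
        - (projCLM blk s).comp (α • D))
      = 1 - α • (blockProj blk s * hessianMatrix f xs) := by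
  have hH : hessianMatrix f xs = clmMat D := jacobianMatrix_eq_clmMat hD
  ext i j
  show (EuclideanSpace.single j (1:ℝ)) i - projCLM blk s ((α • D) (EuclideanSpace.single j 1)) i
      = (1 : Matrix (Fin n) (Fin n) ℝ) i j - α * (blockProj blk s * hessianMatrix f xs) i j
  rw [hH]
  congr 1
  · simp [EuclideanSpace.single_apply, Matrix.one_apply, eq_comm]
  · rw [projCLM_apply, blockProj, Matrix.diagonal_mul]
    show (if blk i = s then ((α • D) (EuclideanSpace.single j 1)) i else 0) = _
    have : ((α • D) (EuclideanSpace.single j 1)) i = α * clmMat D i j := rfl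
    rw [this]
    split <;> simp

lemma foldl_jacobian (hf : ContDiff ℝ 2 f) (h0 : gradient f xs = 0) (l : List (Fin p)) :
    (l.foldl (fun y s => blockGradStep f α blk s y) xs = xs) ∧
    ∃ T : EuclideanSpace ℝ (Fin n) →L[ℝ] EuclideanSpace ℝ (Fin n),
      HasFDerivAt (fun x => l.foldl (fun y s => blockGradStep f α blk s y) x) T xs ∧
      clmMat T = ((l.map fun s =>
        (1 : Matrix (Fin n) (Fin n) ℝ) - α • (blockProj blk s * hessianMatrix f xs)).reverse).prod := by
  have hD : HasFDerivAt (gradient f) (fderiv ℝ (gradient f) xs) xs :=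
    (((gradient_contDiff hf).differentiable one_ne_zero) xs).hasFDerivAt
  induction l with
  | nil =>
    refine ⟨rfl, ContinuousLinearMap.id ℝ _, hasFDerivAt_id xs, ?_⟩
    simp [clmMat_id]
  | cons s l ih =>
    have hfix : blockGradStep f α blk s xs = xs := blockGradStep_fixed h0
    have hstep := hasFDerivAt_blockGradStep α blk s hD
    constructor
    · show (l.foldl (fun y s => blockGradStep f α blk s y) (blockGradStep f α blk s xs)) = xs
      rw [hfix]; exact ih.1
    · obtain ⟨T, hT, hTm⟩ := ih.2
      refine ⟨T.comp (ContinuousLinearMap.id ℝ _ - (projCLM blk s).comp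
          (α • fderiv ℝ (gradient f) xs)), ?_, ?_⟩
      · exact HasFDerivAt.comp xs (hfix.symm ▸ hT) hstep
      · rw [clmMat_comp, hTm, clmMat_step hD s]
        simp [List.prod_append]

lemma jacobian_bcgd (hf : ContDiff ℝ 2 f) (h0 : gradient f xs = 0) :
    jacobianMatrix (bcgdMap f α blk) xs
      = (((List.finRange p).map fun s =>
        (1 : Matrix (Fin n) (Fin n) ℝ) - α • (blockProj blk s * hessianMatrix f xs)).reverse).prod := by
  obtain ⟨-, T, hT, hTm⟩ := foldl_jacobian (α := α) (blk := blk) hf h0 (List.finRange p)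
  have : jacobianMatrix (bcgdMap f α blk) xs = clmMat T := jacobianMatrix_eq_clmMat hT
  rw [this, hTm]

end JacobianComp


-- ===== Part D: the Gauss–Seidel identity (1 + α·Λ)(1 − J) = α·H =====

section GS

variable {n p : ℕ} (blk : Fin n → Fin p) (H : Matrix (Fin n) (Fin n) ℝ) (α : ℝ)

/-- One linearized BCGD factor. -/
def gsA (s : Fin p) : Matrix (Fin n) (Fin n) ℝ := 1 - α • (blockProj blk s * H)

/-- Product of the first `m` factors (in application order). -/
def gsJ (m : ℕ) : Matrix (Fin n) (Fin n) ℝ :=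
  ((((List.finRange p).take m).map (gsA blk H α)).reverse).prod

def gsLow (m : ℕ) : Matrix (Fin n) (Fin n) ℝ :=
  Matrix.of fun i j => if blk j < blk i ∧ (blk i : ℕ) < m then H i j else 0

def gsRow (m : ℕ) : Matrix (Fin n) (Fin n) ℝ :=
  Matrix.of fun i j => if (blk i : ℕ) < m then H i j else 0

lemma gsJ_zero : gsJ blk H α 0 = 1 := by simp [gsJ]

lemma gsJ_succ (m : ℕ) (hm : m < p) :
    gsJ blk H α (m + 1) = gsA blk H α ⟨m, hm⟩ * gsJ blk H α m := by
  have ht : (List.finRange p).take (m + 1)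
      = (List.finRange p).take m ++ [⟨m, hm⟩] := by
    rw [List.take_succ]
    congr 1
    rw [List.getElem?_eq_getElem (by simpa using hm)]
    simp
  rw [gsJ, ht, List.map_append, List.reverse_append]
  simp [gsJ]

lemma mul_eq_zero_of_support {A B : Matrix (Fin n) (Fin n) ℝ} (P : Fin n → Prop)
    [DecidablePred P]
    (hA : ∀ i k, ¬ P k → A i k = 0) (hB : ∀ k j, P k → B k j = 0) : A * B = 0 := by
  ext i j
  rw [Matrix.mul_apply]
  refine Finset.sum_eq_zero fun k _ => ?_
  by_cases h : P k
  · rw [hB k j h, mul_zero]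
  · rw [hA i k h, zero_mul]

lemma blockProj_mul_apply (s : Fin p) (i j : Fin n) :
    (blockProj blk s * H) i j = if blk i = s then H i j else 0 := by
  rw [blockProj, Matrix.diagonal_mul]
  split <;> simp

lemma gs_main : ∀ m, m ≤ p →
    (∀ i j, m ≤ (blk i : ℕ) → gsJ blk H α m i j = (1 : Matrix (Fin n) (Fin n) ℝ) i j) ∧
    (1 + α • gsLow blk H m) * (1 - gsJ blk H α m) = α • gsRow blk H m := by
  intro m
  induction m with
  | zero =>
    intro _
    constructor
    · intro i j _; rw [gsJ_zero]
    · have h1 : gsLow blk H 0 = 0 := by ext i j; simp [gsLow]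
      have h2 : gsRow blk H 0 = 0 := by ext i j; simp [gsRow]
      rw [gsJ_zero, h1, h2]; simp
  | succ m ih =>
    intro hmp
    have hm : m < p := hmp
    obtain ⟨iha, ihb⟩ := ih hm.le
    set s : Fin p := ⟨m, hm⟩ with hs
    set K : Matrix (Fin n) (Fin n) ℝ := blockProj blk s * H with hK
    set Λ : Matrix (Fin n) (Fin n) ℝ :=
      Matrix.of fun i j => if blk j < blk i ∧ blk i = s then H i j else 0 with hΛ
    set U : Matrix (Fin n) (Fin n) ℝ :=
      Matrix.of fun i j => if ¬ (blk j < blk i) ∧ blk i = s then H i j else 0 with hU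
    have hKsplit : K = Λ + U := by
      ext i j
      rw [hK, blockProj_mul_apply]
      show _ = Λ i j + U i j
      rw [hΛ, hU]
      simp only [Matrix.of_apply]
      by_cases h1 : blk i = s <;> by_cases h2 : blk j < blk i
      · have h2' : blk j < s := h1 ▸ h2
        simp [h1, h2']
      · have h2' : ¬ blk j < s := fun hc => h2 (h1 ▸ hc)
        simp [h1, h2']
      · simp [h1]
      · simp [h1]
    have f1 : gsLow blk H m * K = 0 := by
      refine mul_eq_zero_of_support (fun k => (blk k : ℕ) < m) ?_ ?_
      · intro i k hk
        show (if blk k < blk i ∧ (blk i : ℕ) < m then H i k else 0) = 0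
        rw [if_neg]
        rintro ⟨h1, h2⟩
        exact hk (lt_trans h1 h2)
      · intro k j hk
        rw [hK, blockProj_mul_apply, if_neg]
        intro h
        rw [h] at hk
        exact lt_irrefl m hk
    have f2 : Λ * K = 0 := by
      refine mul_eq_zero_of_support (fun k => (blk k : ℕ) < m) ?_ ?_
      · intro i k hk
        show (if blk k < blk i ∧ blk i = s then H i k else 0) = 0
        rw [if_neg]
        rintro ⟨h1, h2⟩
        apply hk
        have : (blk i : ℕ) = m := by rw [h2]
        omega
      · intro k j hk
        rw [hK, blockProj_mul_apply, if_neg]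
        intro h
        rw [h] at hk
        exact lt_irrefl m hk
    have f3 : U * (gsJ blk H α m - 1) = 0 := by
      refine mul_eq_zero_of_support (fun k => m ≤ (blk k : ℕ)) ?_ ?_
      · intro i k hk
        show (if ¬ (blk k < blk i) ∧ blk i = s then H i k else 0) = 0
        rw [if_neg]
        rintro ⟨h1, h2⟩
        apply hk
        have hbi : (blk i : ℕ) = m := by rw [h2]
        have : (blk k : ℕ) ≤ (blk i : ℕ) := by
          by_contra hc
          exact h1 (by omega)
        omega
      · intro k j hk
        show gsJ blk H α m k j - (1 : Matrix (Fin n) (Fin n) ℝ) k j = 0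
        rw [iha k j hk, sub_self]
    have hUJ : U * gsJ blk H α m = U := by
      have := f3
      rw [Matrix.mul_sub, Matrix.mul_one, sub_eq_zero] at this
      exact this
    have f4 : gsLow blk H (m + 1) = gsLow blk H m + Λ := by
      ext i j
      show (if blk j < blk i ∧ (blk i : ℕ) < m + 1 then H i j else 0)
          = (if blk j < blk i ∧ (blk i : ℕ) < m then H i j else 0)
            + (if blk j < blk i ∧ blk i = s then H i j else 0)
      have : blk i = s ↔ (blk i : ℕ) = m := by
        rw [Fin.ext_iff]
      by_cases h1 : blk j < blk i <;> by_cases h2 : (blk i : ℕ) < m <;>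
        by_cases h3 : (blk i : ℕ) = m <;>
        simp [h1, h2, h3, this] <;> omega
    have f5 : gsRow blk H (m + 1) = gsRow blk H m + K := by
      ext i j
      show (if (blk i : ℕ) < m + 1 then H i j else 0)
          = (if (blk i : ℕ) < m then H i j else 0) + K i j
      rw [hK, blockProj_mul_apply]
      have : blk i = s ↔ (blk i : ℕ) = m := by rw [Fin.ext_iff]
      by_cases h2 : (blk i : ℕ) < m <;> by_cases h3 : (blk i : ℕ) = m <;>
        simp [h2, h3, this] <;> omega
    constructor
    · intro i j hi
      rw [gsJ_succ blk H α m hm]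
      rw [Matrix.mul_apply]
      have hAs : ∀ k, gsA blk H α s i k = (1 : Matrix (Fin n) (Fin n) ℝ) i k := by
        intro k
        show (1 : Matrix (Fin n) (Fin n) ℝ) i k - α * (blockProj blk s * H) i k = _
        rw [blockProj_mul_apply, if_neg, mul_zero, sub_zero]
        intro h
        have : (blk i : ℕ) = m := by rw [h]
        omega
      calc ∑ k, gsA blk H α s i k * gsJ blk H α m k j
          = ∑ k, (1 : Matrix (Fin n) (Fin n) ℝ) i k * gsJ blk H α m k j := by
            refine Finset.sum_congr rfl fun k _ => by rw [hAs k]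
        _ = gsJ blk H α m i j := by
            simp [Matrix.one_apply, Finset.sum_ite_eq]
        _ = (1 : Matrix (Fin n) (Fin n) ℝ) i j := iha i j (by omega)
    · rw [gsJ_succ blk H α m hm, f4, f5]
      have e1 : (1 : Matrix (Fin n) (Fin n) ℝ) - gsA blk H α s * gsJ blk H α m
          = (1 - gsJ blk H α m) + α • (K * gsJ blk H α m) := by
        rw [gsA, Matrix.sub_mul, Matrix.one_mul, Matrix.smul_mul, ← hK]
        abel
      rw [e1, smul_add (α) (gsLow blk H m) Λ, ← add_assoc]
      have expand : (1 + α • gsLow blk H m + α • Λ) *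
          ((1 - gsJ blk H α m) + α • (K * gsJ blk H α m))
          = (1 + α • gsLow blk H m) * (1 - gsJ blk H α m)
            + α • (Λ * (1 - gsJ blk H α m))
            + α • (K * gsJ blk H α m)
            + (α * α) • (gsLow blk H m * K * gsJ blk H α m)
            + (α * α) • (Λ * K * gsJ blk H α m) := by
        simp only [Matrix.add_mul, Matrix.mul_add, Matrix.smul_mul, Matrix.mul_smul,
          Matrix.one_mul, Matrix.mul_assoc, smul_add, smul_smul]
        abel
      rw [expand, f1, f2, ihb]
      have e2 : Λ * (1 - gsJ blk H α m) + K * gsJ blk H α m = K := by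
        rw [Matrix.mul_sub, Matrix.mul_one, hKsplit, Matrix.add_mul, hUJ]
        abel
      rw [Matrix.zero_mul, smul_zero, add_zero, add_zero, add_assoc, ← smul_add, e2, smul_add]

/-- The final Gauss–Seidel identity. -/
lemma gs_identity :
    (1 + α • lowerBlockPart blk H) *
      (1 - (((List.finRange p).map (gsA blk H α)).reverse).prod) = α • H := by
  have h := (gs_main blk H α p le_rfl).2
  have hJ : gsJ blk H α p = (((List.finRange p).map (gsA blk H α)).reverse).prod := by
    rw [gsJ, List.take_of_length_le (by simp)]
  have hL : gsLow blk H p = lowerBlockPart blk H := by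
    ext i j
    show (if blk j < blk i ∧ (blk i : ℕ) < p then H i j else 0)
        = (if blk j < blk i then H i j else 0)
    simp [(blk i).isLt]
  have hR : gsRow blk H p = H := by
    ext i j
    show (if (blk i : ℕ) < p then H i j else 0) = H i j
    simp [(blk i).isLt]
  rw [hL, hR] at h
  rw [← hJ]
  exact h

end GS


-- ===== Part B: symmetry of the Hessian; Part C: quadratic form bounds =====

section Hess

variable {n : ℕ} {f : EuclideanSpace ℝ (Fin n) → ℝ} {xs : EuclideanSpace ℝ (Fin n)}

lemma euclid_coord (v : EuclideanSpace ℝ (Fin n)) (i : Fin n) :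
    v i = inner (𝕜 := ℝ) v (EuclideanSpace.single i (1:ℝ)) := by
  rw [PiLp.inner_apply]
  simp [EuclideanSpace.single_apply, RCLike.inner_apply]

lemma fderiv_gradient_eq (hf : ContDiff ℝ 2 f) (v : EuclideanSpace ℝ (Fin n)) :
    fderiv ℝ (gradient f) xs v
      = (InnerProductSpace.toDual ℝ (EuclideanSpace ℝ (Fin n))).symm
          (fderiv ℝ (fderiv ℝ f) xs v) := by
  have hgrad : gradient f
      = (⇑(InnerProductSpace.toDual ℝ (EuclideanSpace ℝ (Fin n))).symm) ∘ (fderiv ℝ f) := rfl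
  rw [hgrad, LinearIsometryEquiv.comp_fderiv]
  rfl

lemma hessian_apply (hf : ContDiff ℝ 2 f) (i j : Fin n) :
    hessianMatrix f xs i j
      = fderiv ℝ (fderiv ℝ f) xs (EuclideanSpace.single j 1) (EuclideanSpace.single i 1) := by
  show fderiv ℝ (gradient f) xs (EuclideanSpace.single j 1) i = _
  rw [fderiv_gradient_eq hf]
  exact (euclid_coord _ i).trans InnerProductSpace.toDual_symm_apply

lemma hessian_symm (hf : ContDiff ℝ 2 f) : (hessianMatrix f xs)ᵀ = hessianMatrix f xs := by
  ext i j
  have hsymm : IsSymmSndFDerivAt ℝ f xs := hf.contDiffAt.isSymmSndFDerivAt (by simp)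
  show hessianMatrix f xs j i = hessianMatrix f xs i j
  rw [hessian_apply hf, hessian_apply hf]
  exact hsymm.eq _ _

lemma hessian_quad_le (hf : ContDiff ℝ 2 f) {L : ℝ} (hL : 0 < L)
    (hlip : LipschitzWith (Real.toNNReal L) (gradient f)) (v : Fin n → ℝ) :
    v ⬝ᵥ (hessianMatrix f xs *ᵥ v) ≤ L * (v ⬝ᵥ v) := by
  have hD : HasFDerivAt (gradient f) (fderiv ℝ (gradient f) xs) xs :=
    (((gradient_contDiff hf).differentiable one_ne_zero) xs).hasFDerivAt
  set D := fderiv ℝ (gradient f) xs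
  have hH : hessianMatrix f xs = clmMat D := jacobianMatrix_eq_clmMat hD
  set v' : EuclideanSpace ℝ (Fin n) := (WithLp.equiv 2 (Fin n → ℝ)).symm v with hv'
  have hmv : hessianMatrix f xs *ᵥ v = D v' := by
    rw [hH]; exact clmMat_mulVec D v'
  have hdot : v ⬝ᵥ (hessianMatrix f xs *ᵥ v) = inner (𝕜 := ℝ) v' (D v') := by
    rw [hmv, PiLp.inner_apply]
    simp only [dotProduct, RCLike.inner_apply, conj_trivial]
    exact Finset.sum_congr rfl fun i _ => mul_comm _ _
  have hvv : v ⬝ᵥ v = ‖v'‖ * ‖v'‖ := by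
    rw [← real_inner_self_eq_norm_mul_norm, PiLp.inner_apply]
    simp only [dotProduct, RCLike.inner_apply, conj_trivial]
    rfl
  have hDnorm : ‖D‖ ≤ L := by
    have := norm_fderiv_le_of_lipschitz ℝ (x₀ := xs) hlip
    rwa [Real.coe_toNNReal L hL.le] at this
  calc v ⬝ᵥ (hessianMatrix f xs *ᵥ v) = inner (𝕜 := ℝ) v' (D v') := hdot
    _ ≤ ‖v'‖ * ‖D v'‖ := real_inner_le_norm _ _
    _ ≤ ‖v'‖ * (‖D‖ * ‖v'‖) := by
        refine mul_le_mul_of_nonneg_left (D.le_opNorm v') (norm_nonneg _)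
    _ ≤ ‖v'‖ * (L * ‖v'‖) := by
        refine mul_le_mul_of_nonneg_left
          (mul_le_mul_of_nonneg_right hDnorm (norm_nonneg _)) (norm_nonneg _)
    _ = L * (‖v'‖ * ‖v'‖) := by ring
    _ = L * (v ⬝ᵥ v) := by rw [hvv]

/-- The block-diagonal part inherits the quadratic-form upper bound. -/
lemma blockdiag_quad_le {p : ℕ} (blk : Fin n → Fin p) (M : Matrix (Fin n) (Fin n) ℝ) {L : ℝ}
    (hM : ∀ v : Fin n → ℝ, v ⬝ᵥ (M *ᵥ v) ≤ L * (v ⬝ᵥ v)) (v : Fin n → ℝ) :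
    v ⬝ᵥ ((Matrix.of fun i j => if blk i = blk j then M i j else 0) *ᵥ v) ≤ L * (v ⬝ᵥ v) := by
  classical
  set π : Fin p → (Fin n → ℝ) := fun s i => if blk i = s then v i else 0 with hπ
  have key : ∀ i j : Fin n, (∑ s, π s i * (M i j * π s j))
      = if blk i = blk j then v i * (M i j * v j) else 0 := by
    intro i j
    rw [Finset.sum_eq_single (blk i)]
    · simp only [hπ, if_pos rfl]
      by_cases h : blk j = blk i
      · rw [if_pos h, if_pos h.symm]
      · rw [if_neg h, if_neg (fun hc => h hc.symm), mul_zero, mul_zero]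
    · intro s _ hs
      simp only [hπ, if_neg (fun hc : blk i = s => hs hc.symm), zero_mul]
    · intro h; exact absurd (Finset.mem_univ _) h
  have lhs_eq : v ⬝ᵥ ((Matrix.of fun i j => if blk i = blk j then M i j else 0) *ᵥ v)
      = ∑ i, ∑ j, (if blk i = blk j then v i * (M i j * v j) else 0) := by
    simp only [dotProduct, Matrix.mulVec, Matrix.of_apply]
    refine Finset.sum_congr rfl fun i _ => ?_
    rw [Finset.mul_sum]
    refine Finset.sum_congr rfl fun j _ => ?_
    by_cases h : blk i = blk j
    · rw [if_pos h, if_pos h]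
    · rw [if_neg h, if_neg h, zero_mul, mul_zero]
  have rhs_eq : (∑ s, (π s ⬝ᵥ (M *ᵥ π s)))
      = ∑ i, ∑ j, (if blk i = blk j then v i * (M i j * v j) else 0) := by
    simp only [dotProduct, Matrix.mulVec]
    have : ∀ s, ∑ i, π s i * ∑ j, M i j * π s j = ∑ i, ∑ j, π s i * (M i j * π s j) := by
      intro s
      exact Finset.sum_congr rfl fun i _ => Finset.mul_sum _ _ _
    rw [Finset.sum_congr rfl fun s _ => this s, Finset.sum_comm]
    refine Finset.sum_congr rfl fun i _ => ?_
    rw [Finset.sum_comm]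
    exact Finset.sum_congr rfl fun j _ => key i j
  have h2 : v ⬝ᵥ v = ∑ s, (π s ⬝ᵥ π s) := by
    simp only [dotProduct]
    rw [Finset.sum_comm]
    refine Finset.sum_congr rfl fun i _ => ?_
    rw [Finset.sum_eq_single (blk i)]
    · simp [hπ]
    · intro s _ hs
      simp [hπ, if_neg (fun hc : blk i = s => hs hc.symm)]
    · intro h; exact absurd (Finset.mem_univ _) h
  calc v ⬝ᵥ ((Matrix.of fun i j => if blk i = blk j then M i j else 0) *ᵥ v)
      = ∑ s, (π s ⬝ᵥ (M *ᵥ π s)) := by rw [lhs_eq, ← rhs_eq]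
    _ ≤ ∑ s, L * (π s ⬝ᵥ π s) := Finset.sum_le_sum fun s _ => hM (π s)
    _ = L * (v ⬝ᵥ v) := by rw [← Finset.mul_sum, ← h2]

end Hess


-- ===== Part E: spectral analysis over ℂ =====

section Spectral

variable {n : ℕ}

/-- Complexification of a real matrix. -/
def cm (M : Matrix (Fin n) (Fin n) ℝ) : Matrix (Fin n) (Fin n) ℂ :=
  M.map Complex.ofReal

lemma cm_mul (M N : Matrix (Fin n) (Fin n) ℝ) : cm (M * N) = cm M * cm N := by
  have h : (⇑Complex.ofRealHom : ℝ → ℂ) = Complex.ofReal := rfl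
  show (M * N).map Complex.ofReal = _
  rw [← h]
  exact Matrix.map_mul

lemma cm_one : cm (1 : Matrix (Fin n) (Fin n) ℝ) = 1 :=
  Matrix.map_one Complex.ofReal Complex.ofReal_zero Complex.ofReal_one

lemma cm_add (M N : Matrix (Fin n) (Fin n) ℝ) : cm (M + N) = cm M + cm N := by
  ext i j; simp [cm]

lemma cm_sub (M N : Matrix (Fin n) (Fin n) ℝ) : cm (M - N) = cm M - cm N := by
  ext i j; simp [cm]

lemma cm_smul (a : ℝ) (M : Matrix (Fin n) (Fin n) ℝ) : cm (a • M) = (a : ℂ) • cm M := by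
  ext i j; simp [cm]

lemma cm_transpose (M : Matrix (Fin n) (Fin n) ℝ) : cm Mᵀ = (cm M)ᵀ := by
  ext i j; simp [cm]

lemma star_mulVec_cm (M : Matrix (Fin n) (Fin n) ℝ) (x : Fin n → ℂ) :
    star (cm M *ᵥ x) = cm M *ᵥ (star x) := by
  funext i
  simp only [Pi.star_apply, Matrix.mulVec, dotProduct, cm, Matrix.map_apply]
  rw [star_sum]
  refine Finset.sum_congr rfl fun j _ => ?_
  simp [star_mul', Complex.conj_ofReal, mul_comm]

/-- Conjugate-flip identity for the sesquilinear form of a real matrix. -/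
lemma sesq_flip (M : Matrix (Fin n) (Fin n) ℝ) (x y : Fin n → ℂ) :
    star x ⬝ᵥ (cm M *ᵥ y) = starRingEnd ℂ (star y ⬝ᵥ (cm Mᵀ *ᵥ x)) := by
  have hL : star x ⬝ᵥ (cm M *ᵥ y) = ∑ i, ∑ j, star (x i) * ((M i j : ℂ) * y j) := by
    simp only [dotProduct, Matrix.mulVec, cm, Matrix.map_apply, Pi.star_apply]
    exact Finset.sum_congr rfl fun i _ => Finset.mul_sum _ _ _
  have hR : starRingEnd ℂ (star y ⬝ᵥ (cm Mᵀ *ᵥ x))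
      = ∑ j, ∑ i, (y j * ((M i j : ℂ) * star (x i))) := by
    simp only [dotProduct, Matrix.mulVec, cm, Matrix.map_apply, Pi.star_apply,
      Matrix.transpose_apply]
    rw [map_sum]
    refine Finset.sum_congr rfl fun j _ => ?_
    rw [Finset.mul_sum, map_sum]
    refine Finset.sum_congr rfl fun i _ => ?_
    simp only [_root_.map_mul, Complex.conj_ofReal, Complex.star_def, Complex.conj_conj]
  rw [hL, hR, Finset.sum_comm]
  refine Finset.sum_congr rfl fun j _ => Finset.sum_congr rfl fun i _ => ?_
  ring

/-- Real-decomposition of the sesquilinear form of a *symmetric* real matrix. -/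
lemma sesq_real (M : Matrix (Fin n) (Fin n) ℝ) (hM : Mᵀ = M) (z : Fin n → ℂ) :
    star z ⬝ᵥ (cm M *ᵥ z)
      = (((fun i => (z i).re) ⬝ᵥ (M *ᵥ fun i => (z i).re)
          + (fun i => (z i).im) ⬝ᵥ (M *ᵥ fun i => (z i).im) : ℝ) : ℂ) := by
  have hMij : ∀ i j, M j i = M i j := fun i j => by
    have := congrFun (congrFun hM j) i
    simpa using this.symm
  have hL : star z ⬝ᵥ (cm M *ᵥ z) = ∑ i, ∑ j, star (z i) * ((M i j : ℂ) * z j) := by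
    simp only [dotProduct, Matrix.mulVec, cm, Matrix.map_apply, Pi.star_apply]
    exact Finset.sum_congr rfl fun i _ => Finset.mul_sum _ _ _
  rw [hL]
  apply Complex.ext
  · rw [Complex.re_sum]
    simp only [Complex.ofReal_re]
    rw [show ((fun i => (z i).re) ⬝ᵥ (M *ᵥ fun i => (z i).re)
          + (fun i => (z i).im) ⬝ᵥ (M *ᵥ fun i => (z i).im))
        = ∑ i, ((z i).re * ∑ j, M i j * (z j).re + (z i).im * ∑ j, M i j * (z j).im) from by
      simp only [dotProduct, Matrix.mulVec]
      rw [← Finset.sum_add_distrib]]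
    refine Finset.sum_congr rfl fun i _ => ?_
    rw [Complex.re_sum, Finset.mul_sum, Finset.mul_sum, ← Finset.sum_add_distrib]
    refine Finset.sum_congr rfl fun j _ => ?_
    simp only [Complex.star_def, Complex.mul_re, Complex.ofReal_re, Complex.ofReal_im,
      Complex.conj_re, Complex.conj_im, Complex.mul_im]
    ring
  · rw [Complex.im_sum]
    simp only [Complex.ofReal_im]
    have expand : ∀ i, (∑ j, star (z i) * ((M i j : ℂ) * z j)).im
        = ∑ j, (M i j * ((z i).re * (z j).im) - M i j * ((z i).im * (z j).re)) := by
      intro i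
      rw [Complex.im_sum]
      refine Finset.sum_congr rfl fun j _ => ?_
      simp only [Complex.star_def, Complex.mul_im, Complex.mul_re, Complex.ofReal_re,
        Complex.ofReal_im, Complex.conj_re, Complex.conj_im]
      ring
    rw [Finset.sum_congr rfl fun i _ => expand i]
    simp only [Finset.sum_sub_distrib]
    have swap : ∑ i, ∑ j, M i j * ((z i).re * (z j).im)
        = ∑ i, ∑ j, M i j * ((z i).im * (z j).re) := by
      rw [Finset.sum_comm]
      refine Finset.sum_congr rfl fun i _ => Finset.sum_congr rfl fun j _ => ?_
      rw [hMij i j]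
      ring
    rw [swap, sub_self]

lemma sum_normSq_pos {z : Fin n → ℂ} (hz : z ≠ 0) :
    0 < (fun i => (z i).re) ⬝ᵥ (fun i => (z i).re) + (fun i => (z i).im) ⬝ᵥ (fun i => (z i).im) := by
  obtain ⟨i0, hi0⟩ : ∃ i, z i ≠ 0 := by
    by_contra h
    push_neg at h
    exact hz (funext h)
  simp only [dotProduct]
  rw [← Finset.sum_add_distrib]
  refine Finset.sum_pos' (fun i _ => add_nonneg (mul_self_nonneg _) (mul_self_nonneg _))
    ⟨i0, Finset.mem_univ _, ?_⟩
  have := Complex.normSq_pos.mpr hi0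
  rw [Complex.normSq_apply] at this
  nlinarith [this]

/-- Positivity of the complexified quadratic form. -/
lemma sesq_pos {Q : Matrix (Fin n) (Fin n) ℝ} (hQsym : Qᵀ = Q)
    (hQpos : ∀ v : Fin n → ℝ, v ⬝ᵥ v ≤ v ⬝ᵥ (Q *ᵥ v)) {z : Fin n → ℂ} (hz : z ≠ 0) :
    0 < (star z ⬝ᵥ (cm Q *ᵥ z)).re := by
  rw [sesq_real Q hQsym z, Complex.ofReal_re]
  have h1 := hQpos (fun i => (z i).re)
  have h2 := hQpos (fun i => (z i).im)
  have h3 := sum_normSq_pos hz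
  linarith

lemma sesq_zero_imp {Q : Matrix (Fin n) (Fin n) ℝ} (hQsym : Qᵀ = Q)
    (hQpos : ∀ v : Fin n → ℝ, v ⬝ᵥ v ≤ v ⬝ᵥ (Q *ᵥ v)) {z : Fin n → ℂ}
    (h : star z ⬝ᵥ (cm Q *ᵥ z) = 0) : z = 0 := by
  by_contra hz
  have := sesq_pos hQsym hQpos hz
  rw [h] at this
  simp at this

end Spectral


section SpectralMain

variable {n : ℕ} {W H Q J : Matrix (Fin n) (Fin n) ℝ} {α : ℝ}

lemma eigen_identity (hWJ : W * (1 - J) = α • H) (u : Fin n → ℂ) :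
    cm W *ᵥ ((1 - cm J) *ᵥ u) = (α : ℂ) • (cm H *ᵥ u) := by
  rw [Matrix.mulVec_mulVec]
  have h : cm W * (1 - cm J) = (α : ℂ) • cm H := by
    rw [← cm_one, ← cm_sub, ← cm_mul, hWJ, cm_smul]
  rw [h, Matrix.smul_mulVec]

lemma Q_symm (hQ : Q = W + Wᵀ - α • H) (hHsym : Hᵀ = H) : Qᵀ = Q := by
  rw [hQ, Matrix.transpose_sub, Matrix.transpose_add, Matrix.transpose_transpose,
    Matrix.transpose_smul, hHsym, add_comm Wᵀ W]

lemma a_real (hHsym : Hᵀ = H) (u : Fin n → ℂ) :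
    starRingEnd ℂ (star u ⬝ᵥ (cm H *ᵥ u)) = star u ⬝ᵥ (cm H *ᵥ u) := by
  have h := sesq_flip H u u
  rw [hHsym] at h
  exact h.symm

lemma sesq_Q (hQ : Q = W + Wᵀ - α • H) (u : Fin n → ℂ) :
    star u ⬝ᵥ (cm Q *ᵥ u)
      = star u ⬝ᵥ (cm W *ᵥ u) + starRingEnd ℂ (star u ⬝ᵥ (cm W *ᵥ u))
        - (α : ℂ) * (star u ⬝ᵥ (cm H *ᵥ u)) := by
  have hQc : cm Q = cm W + cm Wᵀ - (α : ℂ) • cm H := by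
    rw [hQ, cm_sub, cm_add, cm_smul]
  rw [hQc, Matrix.sub_mulVec, Matrix.add_mulVec, Matrix.smul_mulVec,
    dotProduct_sub, dotProduct_add, dotProduct_smul]
  have h := sesq_flip Wᵀ u u
  rw [Matrix.transpose_transpose] at h
  rw [h, smul_eq_mul]

/-- Any eigenvalue of `J` on the unit circle equals `1`. -/
lemma circle_eig_one (hWJ : W * (1 - J) = α • H) (hQ : Q = W + Wᵀ - α • H)
    (hQpos : ∀ v : Fin n → ℝ, v ⬝ᵥ v ≤ v ⬝ᵥ (Q *ᵥ v)) (hHsym : Hᵀ = H)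
    {u : Fin n → ℂ} (hu : u ≠ 0) {l : ℂ} (heig : cm J *ᵥ u = l • u)
    (habs : ‖l‖ = 1) : l = 1 := by
  by_contra hl1
  have hQsym := Q_symm hQ hHsym
  have h1 : (1 - cm J) *ᵥ u = (1 - l) • u := by
    rw [Matrix.sub_mulVec, Matrix.one_mulVec, heig, sub_smul, one_smul]
  have key : (1 - l) • (cm W *ᵥ u) = (α : ℂ) • (cm H *ᵥ u) := by
    have h2 := eigen_identity hWJ u
    rwa [h1, Matrix.mulVec_smul] at h2
  set a := star u ⬝ᵥ (cm H *ᵥ u) with ha_def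
  set ww := star u ⬝ᵥ (cm W *ᵥ u) with hww_def
  have ha : (1 - l) * ww = (α : ℂ) * a := by
    have h3 := congrArg (fun v => star u ⬝ᵥ v) key
    simpa only [dotProduct_smul, smul_eq_mul] using h3
  have haR : starRingEnd ℂ a = a := a_real hHsym u
  have ha' : (1 - starRingEnd ℂ l) * (starRingEnd ℂ ww) = (α : ℂ) * a := by
    have h4 := congrArg (starRingEnd ℂ) ha
    rw [_root_.map_mul, _root_.map_mul, _root_.map_sub, _root_.map_one,
      Complex.conj_ofReal, haR] at h4
    exact h4
  have hq := sesq_Q (W := W) (H := H) hQ u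
  rw [← hww_def, ← ha_def] at hq
  have hmain : (1 - l) * ((1 - starRingEnd ℂ l) * (star u ⬝ᵥ (cm Q *ᵥ u)))
      = (α : ℂ) * a * (1 - l * starRingEnd ℂ l) := by
    rw [hq]
    linear_combination (1 - starRingEnd ℂ l) * ha + (1 - l) * ha'
  have hll : l * starRingEnd ℂ l = 1 := by
    rw [Complex.mul_conj, Complex.normSq_eq_norm_sq, habs]
    norm_num
  rw [hll, sub_self, mul_zero] at hmain
  have h2 : (1 - l) ≠ 0 := sub_ne_zero.mpr fun h => hl1 h.symm
  have h3 : (1 - starRingEnd ℂ l) ≠ 0 := by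
    intro h
    apply hl1
    have : starRingEnd ℂ l = 1 := (sub_eq_zero.mp h).symm
    calc l = starRingEnd ℂ (starRingEnd ℂ l) := (Complex.conj_conj l).symm
      _ = 1 := by rw [this]; simp
  have h4 : star u ⬝ᵥ (cm Q *ᵥ u) ≠ 0 := fun h => hu (sesq_zero_imp hQsym hQpos h)
  rcases mul_eq_zero.mp hmain with h | h
  · exact h2 h
  rcases mul_eq_zero.mp h with h | h
  · exact h3 h
  · exact h4 h

/-- Semisimplicity at the eigenvalue 1. -/
lemma ker_one_sq (hWJ : W * (1 - J) = α • H) (hQ : Q = W + Wᵀ - α • H)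
    (hQpos : ∀ v : Fin n → ℝ, v ⬝ᵥ v ≤ v ⬝ᵥ (Q *ᵥ v)) (hHsym : Hᵀ = H) (hα : 0 < α)
    (x : Fin n → ℂ) (h : (1 - cm J) *ᵥ ((1 - cm J) *ᵥ x) = 0) :
    (1 - cm J) *ᵥ x = 0 := by
  have hQsym := Q_symm hQ hHsym
  set y := (1 - cm J) *ᵥ x with hy
  have hα0 : ((α : ℂ)) ≠ 0 := by
    simpa using hα.ne'
  have hHy : cm H *ᵥ y = 0 := by
    have h5 := eigen_identity hWJ y
    rw [hy] at h5
    rw [h, Matrix.mulVec_zero] at h5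
    exact (smul_eq_zero.mp h5.symm).resolve_left hα0
  have hWy : cm W *ᵥ y = (α : ℂ) • (cm H *ᵥ x) := by
    have h6 := eigen_identity hWJ x
    rw [← hy] at h6
    exact h6
  have hwz : star y ⬝ᵥ (cm W *ᵥ y) = 0 := by
    rw [hWy, dotProduct_smul]
    have h7 : star y ⬝ᵥ (cm H *ᵥ x) = 0 := by
      rw [sesq_flip H y x, hHsym, hHy]
      simp
    rw [h7, smul_zero]
  have hq0 : star y ⬝ᵥ (cm Q *ᵥ y) = 0 := by
    rw [sesq_Q (W := W) (H := H) hQ y, hwz, hHy]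
    simp
  exact sesq_zero_imp hQsym hQpos hq0

end SpectralMain


section Dynamics

variable {n : ℕ} {W H Q J : Matrix (Fin n) (Fin n) ℝ} {α : ℝ}

/-- Real Stein identity. -/
lemma stein_real (hWJ : W * (1 - J) = α • H) (hQ : Q = W + Wᵀ - α • H) (hHsym : Hᵀ = H) :
    (1 - J)ᵀ * Q * (1 - J) = α • (H - Jᵀ * H * J) := by
  have h1 : (1 - J)ᵀ * Q * (1 - J)
      = (1 - J)ᵀ * (W * (1 - J)) + ((1 - J)ᵀ * Wᵀ) * (1 - J)
        - α • ((1 - J)ᵀ * H * (1 - J)) := by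
    rw [hQ]
    simp only [Matrix.sub_mul, Matrix.add_mul, Matrix.mul_sub, Matrix.mul_add,
      Matrix.smul_mul, Matrix.mul_smul, Matrix.mul_one, Matrix.one_mul, Matrix.mul_assoc,
      smul_sub]
    abel
  rw [h1, hWJ]
  have h2 : (1 - J)ᵀ * Wᵀ = (W * (1 - J))ᵀ := by rw [Matrix.transpose_mul]
  rw [h2, hWJ, Matrix.transpose_smul, hHsym]
  rw [Matrix.mul_smul, Matrix.smul_mul, ← smul_add, ← smul_sub]
  congr 1
  rw [Matrix.transpose_sub, Matrix.transpose_one]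
  noncomm_ring

/-- Complexified Stein identity. -/
lemma stein_cm (hWJ : W * (1 - J) = α • H) (hQ : Q = W + Wᵀ - α • H) (hHsym : Hᵀ = H) :
    (1 - cm J)ᵀ * cm Q * (1 - cm J) = (α : ℂ) • (cm H - (cm J)ᵀ * cm H * cm J) := by
  have h := congrArg cm (stein_real hWJ hQ hHsym)
  rw [cm_mul, cm_mul, cm_transpose, cm_sub, cm_one, cm_smul, cm_sub, cm_mul, cm_mul,
    cm_transpose] at h
  exact h

lemma flip_vec {B : Matrix (Fin n) (Fin n) ℂ} (v w : Fin n → ℂ) :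
    (B *ᵥ v) ⬝ᵥ w = v ⬝ᵥ (Bᵀ *ᵥ w) := by
  rw [dotProduct_mulVec, Matrix.vecMul_transpose]

lemma sesq_conj (M : Matrix (Fin n) (Fin n) ℝ) (A : Matrix (Fin n) (Fin n) ℂ) (x : Fin n → ℂ) :
    star (cm M *ᵥ x) ⬝ᵥ (A *ᵥ (cm M *ᵥ x)) = star x ⬝ᵥ (((cm M)ᵀ * A * cm M) *ᵥ x) := by
  rw [star_mulVec_cm, Matrix.mulVec_mulVec, flip_vec, Matrix.mulVec_mulVec, Matrix.mul_assoc]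

lemma sesq_nonneg {Q' : Matrix (Fin n) (Fin n) ℝ} (hQsym : Q'ᵀ = Q')
    (hQpos : ∀ v : Fin n → ℝ, v ⬝ᵥ v ≤ v ⬝ᵥ (Q' *ᵥ v)) (z : Fin n → ℂ) :
    0 ≤ (star z ⬝ᵥ (cm Q' *ᵥ z)).re := by
  rw [sesq_real Q' hQsym z, Complex.ofReal_re]
  have h1 := hQpos fun i => (z i).re
  have h2 := hQpos fun i => (z i).im
  have h3 : (0:ℝ) ≤ (fun i => (z i).re) ⬝ᵥ (fun i => (z i).re) :=
    Finset.sum_nonneg fun i _ => mul_self_nonneg _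
  have h4 : (0:ℝ) ≤ (fun i => (z i).im) ⬝ᵥ (fun i => (z i).im) :=
    Finset.sum_nonneg fun i _ => mul_self_nonneg _
  linarith

/-- One step of the iteration does not increase the `H`-quadratic form. -/
lemma step_noninc (hWJ : W * (1 - J) = α • H) (hQ : Q = W + Wᵀ - α • H)
    (hQpos : ∀ v : Fin n → ℝ, v ⬝ᵥ v ≤ v ⬝ᵥ (Q *ᵥ v)) (hHsym : Hᵀ = H) (hα : 0 < α)
    (x : Fin n → ℂ) :
    (star (cm J *ᵥ x) ⬝ᵥ (cm H *ᵥ (cm J *ᵥ x))).re ≤ (star x ⬝ᵥ (cm H *ᵥ x)).re := by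
  have hQsym := Q_symm hQ hHsym
  have hstein := stein_cm hWJ hQ hHsym
  have h1 : star ((cm (1 - J)) *ᵥ x) ⬝ᵥ (cm Q *ᵥ ((cm (1 - J)) *ᵥ x))
      = star x ⬝ᵥ ((((cm (1 - J))ᵀ * cm Q * cm (1 - J))) *ᵥ x) := sesq_conj (1 - J) (cm Q) x
  rw [cm_sub, cm_one] at h1
  rw [hstein] at h1
  have h2 : star x ⬝ᵥ (((α : ℂ) • (cm H - (cm J)ᵀ * cm H * cm J)) *ᵥ x)
      = (α : ℂ) * (star x ⬝ᵥ (cm H *ᵥ x) - star x ⬝ᵥ (((cm J)ᵀ * cm H * cm J) *ᵥ x)) := by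
    rw [Matrix.smul_mulVec, dotProduct_smul, smul_eq_mul, Matrix.sub_mulVec,
      dotProduct_sub]
  have h3 : star x ⬝ᵥ (((cm J)ᵀ * cm H * cm J) *ᵥ x)
      = star (cm J *ᵥ x) ⬝ᵥ (cm H *ᵥ (cm J *ᵥ x)) := (sesq_conj J (cm H) x).symm
  have h4 : 0 ≤ (star ((1 - cm J) *ᵥ x) ⬝ᵥ (cm Q *ᵥ ((1 - cm J) *ᵥ x))).re :=
    sesq_nonneg hQsym hQpos _
  rw [h1, h2, h3] at h4
  have h5 : ((α : ℂ) * (star x ⬝ᵥ (cm H *ᵥ x) - star (cm J *ᵥ x) ⬝ᵥ (cm H *ᵥ (cm J *ᵥ x)))).re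
      = α * ((star x ⬝ᵥ (cm H *ᵥ x)).re - (star (cm J *ᵥ x) ⬝ᵥ (cm H *ᵥ (cm J *ᵥ x))).re) := by
    rw [Complex.mul_re, Complex.ofReal_re, Complex.ofReal_im, zero_mul, sub_zero,
      Complex.sub_re]
  rw [h5] at h4
  nlinarith

/-- Extraction of a genuine eigenvector from a generalized one. -/
lemma exists_eigvec {μ : ℂ} {B : Matrix (Fin n) (Fin n) ℂ} :
    ∀ (k : ℕ) (x : Fin n → ℂ), x ≠ 0 →
      ((Matrix.mulVecLin B - μ • 1) ^ k) x = 0 → ∃ v, v ≠ 0 ∧ B *ᵥ v = μ • v := by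
  intro k
  induction k with
  | zero =>
    intro x hx h
    rw [pow_zero, Module.End.one_apply] at h
    exact absurd h hx
  | succ k ih =>
    intro x hx h
    by_cases hy : (Matrix.mulVecLin B - μ • 1) x = 0
    · refine ⟨x, hx, ?_⟩
      have : Matrix.mulVecLin B x - μ • x = 0 := by
        simpa [LinearMap.sub_apply, LinearMap.smul_apply, Module.End.one_apply] using hy
      rw [sub_eq_zero] at this
      simpa [Matrix.mulVecLin_apply] using this
    · refine ih _ hy ?_
      rw [pow_succ, Module.End.mul_apply] at h
      exact h

lemma mulVec_pow (B : Matrix (Fin n) (Fin n) ℂ) (k : ℕ) (x : Fin n → ℂ) :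
    B ^ k *ᵥ x = ((Matrix.mulVecLin B) ^ k) x := by
  induction k with
  | zero => rw [pow_zero, pow_zero, Matrix.one_mulVec, Module.End.one_apply]
  | succ k ih =>
    rw [pow_succ', pow_succ', ← Matrix.mulVec_mulVec, ih, Module.End.mul_apply,
      Matrix.mulVecLin_apply]

/-- Scalar estimate: binomial times geometric tends to zero. -/
lemma choose_geom_tendsto (m : ℕ) {r : ℝ} (h0 : 0 ≤ r) (h1 : r < 1) :
    Filter.Tendsto (fun k : ℕ => (k.choose m : ℝ) * r ^ (k - m)) Filter.atTop (𝓝 0) := by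
  rcases eq_or_lt_of_le h0 with h0' | h0'
  · refine Filter.Tendsto.congr' ?_ tendsto_const_nhds
    filter_upwards [Filter.eventually_ge_atTop (m + 1)] with k hk
    rw [← h0', zero_pow (by omega), mul_zero]
  · have hg : Filter.Tendsto (fun k : ℕ => ((k : ℝ) ^ m * r ^ k) * (1 / r ^ m))
        Filter.atTop (𝓝 0) := by
      have := (tendsto_pow_const_mul_const_pow_of_lt_one m h0 h1).mul_const (1 / r ^ m)
      simpa using this
    refine squeeze_zero' ?_ ?_ hg
    · filter_upwards with k
      positivity
    · filter_upwards [Filter.eventually_ge_atTop m] with k hk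
      have hc : (k.choose m : ℝ) ≤ (k : ℝ) ^ m := by
        exact_mod_cast Nat.choose_le_pow k m
      have hr : r ^ (k - m) = r ^ k / r ^ m := pow_sub₀ r h0'.ne' hk
      rw [hr, div_eq_mul_one_div, ← mul_assoc]
      have h6 : (k.choose m : ℝ) * r ^ k ≤ (k : ℝ) ^ m * r ^ k :=
        mul_le_mul_of_nonneg_right hc (by positivity)
      exact mul_le_mul_of_nonneg_right h6 (by positivity)
    

end Dynamics


/-- The central contradiction: if `J` satisfies the Gauss–Seidel/Stein structure with an
indefinite symmetric `H`, then it must have an eigenvalue of modulus `> 1`. -/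
theorem spectral_contradiction
    {n : ℕ} {W H Q J : Matrix (Fin n) (Fin n) ℝ} {α : ℝ} (hα : 0 < α)
    (hWJ : W * (1 - J) = α • H)
    (hQ : Q = W + Wᵀ - α • H)
    (hQpos : ∀ v : Fin n → ℝ, v ⬝ᵥ v ≤ v ⬝ᵥ (Q *ᵥ v))
    (hHsym : Hᵀ = H)
    {c : ℝ} {w : Fin n → ℝ} (hc : c < 0) (hw : w ≠ 0) (hHw : H *ᵥ w = c • w)
    (hbound : ∀ z : ℂ, IsEigenvalue J z → ‖z‖ ≤ 1) : False := by
  classical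
  set φ : Module.End ℂ (Fin n → ℂ) := Matrix.mulVecLin (cm J) with hφ
  set wc : Fin n → ℂ := fun i => ((w i : ℝ) : ℂ) with hwc
  have hα0 : ((α : ℝ) : ℂ) ≠ 0 := by simpa using hα.ne'
  have hsup : ⨆ μ, φ.maxGenEigenspace μ = ⊤ := Module.End.iSup_maxGenEigenspace_eq_top φ
  have hwc_mem : wc ∈ ⨆ μ, φ.maxGenEigenspace μ := by rw [hsup]; trivial
  obtain ⟨d, hd, hdsum⟩ := (Submodule.mem_iSup_iff_exists_finsupp _ wc).mp hwc_mem
  -- semisimplicity at the eigenvalue 1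
  have hstep1 : ∀ (k : ℕ) (z : Fin n → ℂ), ((φ - (1 : ℂ) • 1) ^ k) z = 0 →
      (1 - cm J) *ᵥ z = 0 := by
    intro k
    induction k with
    | zero =>
      intro z hk
      rw [pow_zero, Module.End.one_apply] at hk
      rw [hk, Matrix.mulVec_zero]
    | succ k ih =>
      intro z hk
      rw [pow_succ, Module.End.mul_apply] at hk
      have hz1 := ih _ hk
      have htrans : (φ - (1 : ℂ) • 1) z = -((1 - cm J) *ᵥ z) := by
        simp only [LinearMap.sub_apply, LinearMap.smul_apply, Module.End.one_apply, hφ,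
          Matrix.mulVecLin_apply, Matrix.sub_mulVec, Matrix.one_mulVec, one_smul, neg_sub]
      rw [htrans, Matrix.mulVec_neg, neg_eq_zero] at hz1
      exact ker_one_sq hWJ hQ hQpos hHsym hα z hz1
  have hker1 : (1 - cm J) *ᵥ d 1 = 0 := by
    obtain ⟨k, hk⟩ := (Module.End.mem_maxGenEigenspace φ 1 (d 1)).mp (hd 1)
    exact hstep1 k _ hk
  have hJd1 : cm J *ᵥ d 1 = d 1 := by
    have h := hker1
    rw [Matrix.sub_mulVec, Matrix.one_mulVec, sub_eq_zero] at h
    exact h.symm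
  have hHd1 : cm H *ᵥ d 1 = 0 := by
    have h := eigen_identity hWJ (d 1)
    rw [hker1, Matrix.mulVec_zero] at h
    exact (smul_eq_zero.mp h.symm).resolve_left hα0
  -- convergence of iterates to d 1
  have hconst : ∀ k : ℕ, (cm J) ^ k *ᵥ d 1 = d 1 := by
    intro k
    induction k with
    | zero => rw [pow_zero, Matrix.one_mulVec]
    | succ k ih => rw [pow_succ', ← Matrix.mulVec_mulVec, ih, hJd1]
  have hterm : ∀ μ ∈ d.support, Filter.Tendsto (fun k => (cm J) ^ k *ᵥ d μ)
      Filter.atTop (𝓝 (if μ = 1 then d 1 else 0)) := by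
    intro μ hμ
    by_cases hμ1 : μ = 1
    · rw [if_pos hμ1, hμ1]
      exact Filter.Tendsto.congr (fun k => (hconst k).symm) tendsto_const_nhds
    · rw [if_neg hμ1]
      have hdμ0 : d μ ≠ 0 := Finsupp.mem_support_iff.mp hμ
      obtain ⟨k₀, hk₀⟩ := (Module.End.mem_maxGenEigenspace φ μ (d μ)).mp (hd μ)
      obtain ⟨v, hv0, hveq⟩ := exists_eigvec k₀ (d μ) hdμ0 hk₀
      have habs : ‖μ‖ ≤ 1 := hbound μ ⟨v, hv0, hveq⟩
      have hlt : ‖μ‖ < 1 :=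
        lt_of_le_of_ne habs fun h => hμ1 (circle_eig_one hWJ hQ hQpos hHsym hv0 hveq h)
      set u : ℕ → (Fin n → ℂ) := fun m => ((φ - μ • 1) ^ m) (d μ) with hu
      have hvan : ∀ m, k₀ ≤ m → u m = 0 := by
        intro m hm
        show ((φ - μ • 1) ^ m) (d μ) = 0
        rw [show m = (m - k₀) + k₀ from (Nat.sub_add_cancel hm).symm, pow_add,
          Module.End.mul_apply, hk₀, map_zero]
      have hexp : ∀ k, (φ ^ k) (d μ)
          = ∑ m ∈ Finset.range (k + 1), ((k.choose m : ℂ) * μ ^ (k - m)) • u m := by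
        intro k
        have hcomm : Commute (φ - μ • 1) (μ • (1 : Module.End ℂ (Fin n → ℂ))) :=
          (Commute.one_right (φ - μ • 1)).smul_right μ
        have hφeq : φ ^ k = ((φ - μ • 1) + μ • 1) ^ k := by rw [sub_add_cancel]
        rw [hφeq, hcomm.add_pow, LinearMap.sum_apply]
        refine Finset.sum_congr rfl fun m hm => ?_
        rw [Module.End.mul_apply, Module.End.mul_apply, Module.End.natCast_apply]
        rw [smul_pow, one_pow, LinearMap.smul_apply, Module.End.one_apply]
        rw [_root_.map_smul ((φ - μ • 1) ^ m : Module.End ℂ (Fin n → ℂ)), map_nsmul]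
        show (μ ^ (k - m)) • ((k.choose m) • u m) = _
        rw [← Nat.cast_smul_eq_nsmul ℂ, smul_smul, mul_comm]
      have heventual : ∀ k, k₀ ≤ k → (cm J) ^ k *ᵥ d μ
          = ∑ m ∈ Finset.range k₀, ((k.choose m : ℂ) * μ ^ (k - m)) • u m := by
        intro k hk
        rw [mulVec_pow, ← hφ, hexp k]
        refine (Finset.sum_subset (Finset.range_subset_range.mpr (by omega)) fun m hm hm' => ?_).symm
        have hm2 : k₀ ≤ m := by
          rw [Finset.mem_range] at hm'
          omega
        rw [hvan m hm2, smul_zero]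
      have htend0 : ∀ m ∈ Finset.range k₀, Filter.Tendsto
          (fun k : ℕ => ((k.choose m : ℂ) * μ ^ (k - m)) • u m) Filter.atTop (𝓝 0) := by
        intro m _
        refine squeeze_zero_norm' ?_
          (by simpa using
            (choose_geom_tendsto m (norm_nonneg μ) hlt).mul_const ‖u m‖)
        filter_upwards with k
        rw [norm_smul, norm_mul, norm_pow]
        have h1 : ‖((k.choose m : ℕ) : ℂ)‖ = ((k.choose m : ℕ) : ℝ) := by
          rw [Complex.norm_natCast]
        have h2 : ‖μ‖ = ‖μ‖ := rfl
        rw [h1, h2]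
      have hfin := tendsto_finset_sum (Finset.range k₀) htend0
      rw [Finset.sum_const_zero] at hfin
      refine Filter.Tendsto.congr' ?_ hfin
      filter_upwards [Filter.eventually_ge_atTop k₀] with k hk
      exact (heventual k hk).symm
  have hconv : Filter.Tendsto (fun k => (cm J) ^ k *ᵥ wc) Filter.atTop (𝓝 (d 1)) := by
    have hrepr : ∀ k, (cm J) ^ k *ᵥ wc = ∑ μ ∈ d.support, (cm J) ^ k *ᵥ d μ := by
      intro k
      rw [← hdsum, Finsupp.sum]
      exact map_sum (Matrix.mulVecLin ((cm J) ^ k)) _ _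
    have hsum := tendsto_finset_sum d.support hterm
    have hval : (∑ μ ∈ d.support, if μ = 1 then d 1 else 0) = d 1 := by
      rw [Finset.sum_ite_eq' d.support (1 : ℂ) fun _ => d 1]
      by_cases h1 : (1 : ℂ) ∈ d.support
      · rw [if_pos h1]
      · rw [if_neg h1]
        exact (Finsupp.notMem_support_iff.mp h1).symm
    rw [hval] at hsum
    exact Filter.Tendsto.congr (fun k => (hrepr k).symm) hsum
  -- the quadratic form along the iterates
  have hmono : ∀ k : ℕ,
      (star ((cm J) ^ (k+1) *ᵥ wc) ⬝ᵥ (cm H *ᵥ ((cm J) ^ (k+1) *ᵥ wc))).re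
        ≤ (star ((cm J) ^ k *ᵥ wc) ⬝ᵥ (cm H *ᵥ ((cm J) ^ k *ᵥ wc))).re := by
    intro k
    have hv : (cm J) ^ (k + 1) *ᵥ wc = cm J *ᵥ ((cm J) ^ k *ᵥ wc) := by
      rw [Matrix.mulVec_mulVec, ← pow_succ']
    rw [hv]
    exact step_noninc hWJ hQ hQpos hHsym hα _
  have hle : ∀ k : ℕ,
      (star ((cm J) ^ k *ᵥ wc) ⬝ᵥ (cm H *ᵥ ((cm J) ^ k *ᵥ wc))).re
        ≤ (star ((cm J) ^ 0 *ᵥ wc) ⬝ᵥ (cm H *ᵥ ((cm J) ^ 0 *ᵥ wc))).re := by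
    intro k
    induction k with
    | zero => exact le_rfl
    | succ k ih => exact (hmono k).trans ih
  have ha0 : (star ((cm J) ^ 0 *ᵥ wc) ⬝ᵥ (cm H *ᵥ ((cm J) ^ 0 *ᵥ wc))).re
      = c * (w ⬝ᵥ w) := by
    rw [pow_zero, Matrix.one_mulVec]
    rw [sesq_real H hHsym wc, Complex.ofReal_re]
    have hre : (fun i => ((wc i).re)) = w := funext fun i => by rw [hwc]; simp
    have him : (fun i => ((wc i).im)) = (0 : Fin n → ℝ) := funext fun i => by rw [hwc]; simp
    rw [hre, him, hHw, dotProduct_smul, smul_eq_mul, Matrix.mulVec_zero,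
      dotProduct_zero, add_zero]
  have hwpos : 0 < w ⬝ᵥ w := by
    obtain ⟨i0, hi0⟩ : ∃ i, w i ≠ 0 := by
      by_contra h
      push_neg at h
      exact hw (funext h)
    exact Finset.sum_pos' (fun i _ => mul_self_nonneg _)
      ⟨i0, Finset.mem_univ _, mul_self_pos.mpr hi0⟩
  have hFcont : Continuous fun z : Fin n → ℂ => (star z ⬝ᵥ (cm H *ᵥ z)).re := by
    apply Complex.continuous_re.comp
    show Continuous fun z : Fin n → ℂ => ∑ i, star (z i) * ∑ j, cm H i j * z j
    refine continuous_finset_sum _ fun i _ => Continuous.mul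
      (continuous_star.comp (continuous_apply i)) ?_
    exact continuous_finset_sum _ fun j _ => continuous_const.mul (continuous_apply j)
  have hlim : Filter.Tendsto
      (fun k => (star ((cm J) ^ k *ᵥ wc) ⬝ᵥ (cm H *ᵥ ((cm J) ^ k *ᵥ wc))).re)
      Filter.atTop (𝓝 0) := by
    have h := (hFcont.tendsto (d 1)).comp hconv
    have h0 : (star (d 1) ⬝ᵥ (cm H *ᵥ d 1)).re = 0 := by
      rw [hHd1, dotProduct_zero]
      simp
    rwa [h0] at h
  have hfinal : (0 : ℝ) ≤ (star ((cm J) ^ 0 *ᵥ wc) ⬝ᵥ (cm H *ᵥ ((cm J) ^ 0 *ᵥ wc))).re :=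
    le_of_tendsto' hlim hle
  rw [ha0] at hfinal
  nlinarith


/-- Positivity of `Q = W + Wᵀ - α•H` for the BCGD splitting. -/
lemma Q_pos_bound {n p : ℕ} (blk : Fin n → Fin p) (H : Matrix (Fin n) (Fin n) ℝ)
    (hHsym : Hᵀ = H) {L α : ℝ} (hL : 0 < L) (hα : 0 < α) (hα' : α < 1 / L)
    (hHquad : ∀ v : Fin n → ℝ, v ⬝ᵥ (H *ᵥ v) ≤ L * (v ⬝ᵥ v)) :
    ∀ v : Fin n → ℝ, v ⬝ᵥ v ≤ v ⬝ᵥ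
      (((1 + α • lowerBlockPart blk H) + (1 + α • lowerBlockPart blk H)ᵀ - α • H) *ᵥ v) := by
  intro v
  have hHji : ∀ i j, H j i = H i j := fun i j => by
    have := congrFun (congrFun hHsym j) i
    simpa using this.symm
  set Dm : Matrix (Fin n) (Fin n) ℝ :=
    Matrix.of fun i j => if blk i = blk j then H i j else 0 with hDm
  have hQD : (1 + α • lowerBlockPart blk H) + (1 + α • lowerBlockPart blk H)ᵀ - α • H
      = (2 : ℝ) • (1 : Matrix (Fin n) (Fin n) ℝ) - α • Dm := by
    ext i j
    show (1 : Matrix (Fin n) (Fin n) ℝ) i j + α * (if blk j < blk i then H i j else 0)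
        + ((1 : Matrix (Fin n) (Fin n) ℝ) j i + α * (if blk i < blk j then H j i else 0))
        - α * H i j
      = 2 * (1 : Matrix (Fin n) (Fin n) ℝ) i j - α * (if blk i = blk j then H i j else 0)
    have h1 : (1 : Matrix (Fin n) (Fin n) ℝ) j i = (1 : Matrix (Fin n) (Fin n) ℝ) i j := by
      simp [Matrix.one_apply, eq_comm]
    rw [h1]
    rcases lt_trichotomy (blk i) (blk j) with h | h | h
    · rw [if_neg (asymm h), if_pos h, if_neg (ne_of_lt h), hHji i j]
      ring
    · rw [if_neg (by rw [h]; exact lt_irrefl _), if_neg (by rw [h]; exact lt_irrefl _),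
        if_pos h]
      ring
    · rw [if_pos h, if_neg (asymm h), if_neg (ne_of_gt h)]
      ring
  rw [hQD]
  have hexpand : v ⬝ᵥ (((2 : ℝ) • (1 : Matrix (Fin n) (Fin n) ℝ) - α • Dm) *ᵥ v)
      = 2 * (v ⬝ᵥ v) - α * (v ⬝ᵥ (Dm *ᵥ v)) := by
    rw [Matrix.sub_mulVec, dotProduct_sub, Matrix.smul_mulVec,
      Matrix.smul_mulVec, Matrix.one_mulVec, dotProduct_smul,
      dotProduct_smul, smul_eq_mul, smul_eq_mul]
  rw [hexpand]
  have hDquad : v ⬝ᵥ (Dm *ᵥ v) ≤ L * (v ⬝ᵥ v) := blockdiag_quad_le blk H hHquad v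
  have hαL : α * L < 1 := (lt_div_iff₀ hL).mp hα'
  have hvv : 0 ≤ v ⬝ᵥ v := Finset.sum_nonneg fun i _ => mul_self_nonneg _
  nlinarith [mul_le_mul_of_nonneg_left hDquad hα.le]

/-- the Jacobian of the BCGD map at a strict saddle point has an
eigenvalue of magnitude strictly greater than one. -/
theorem bcgd_jacobian_has_expanding_eigenvalue
    {n p : ℕ} (hp : 0 < p) (blk : Fin n → Fin p)
    (hmono : Monotone blk) (hsurj : Function.Surjective blk)
    (f : EuclideanSpace ℝ (Fin n) → ℝ) (hf : ContDiff ℝ 2 f)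
    (L : ℝ) (hL : 0 < L) (hlip : LipschitzWith (Real.toNNReal L) (gradient f))
    (α : ℝ) (hα : 0 < α) (hα' : α < 1 / L)
    (xs : EuclideanSpace ℝ (Fin n)) (hxs : IsStrictSaddle f xs) :
    ∃ z : ℂ, IsEigenvalue (jacobianMatrix (bcgdMap f α blk) xs) z ∧ 1 < ‖z‖ := by
  obtain ⟨h0, c, w, hc, hw, hHw⟩ := hxs
  set H := hessianMatrix f xs with hH
  have hHsym : Hᵀ = H := hessian_symm hf
  have hquad : ∀ v : Fin n → ℝ, v ⬝ᵥ (H *ᵥ v) ≤ L * (v ⬝ᵥ v) := fun v =>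
    hessian_quad_le hf hL hlip v
  by_contra hcon
  push_neg at hcon
  have hJeq := jacobian_bcgd (α := α) (blk := blk) hf h0
  set Jm := (((List.finRange p).map fun s =>
    (1 : Matrix (Fin n) (Fin n) ℝ) - α • (blockProj blk s * H)).reverse).prod with hJm
  have hWJ : (1 + α • lowerBlockPart blk H) * (1 - Jm) = α • H := gs_identity blk H α
  have hQpos := Q_pos_bound blk H hHsym hL hα hα' hquad
  have hbound : ∀ z : ℂ, IsEigenvalue Jm z → ‖z‖ ≤ 1 := by
    intro z hz
    refine hcon z ?_
    rw [hJeq]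
    exact hz
  exact spectral_contradiction hα hWJ rfl hQpos hHsym hc hw hHw hbound

end
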